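/- In the space X of nondecreasing functions from ω₂ to ω₁ + 1, for each ξ < ω₁ the set A^ξ = { x ∈ X : x(β) ≤ ξ for all β < ω₂ } is a closed nowhere dense P-set in X. -/

import Mathlib

open Ordinal Cardinal

noncomputable section

def omega1 : Ordinal := (aleph 1).ord
def omega2 : Ordinal := (aleph 2).ord

abbrev Idx := {β : Ordinal // β < omega2}
abbrev Val := {γ : Ordinal // γ ≤ omega1}

instance : TopologicalSpace Val := Preorder.topology Val
instance : OrderTopology Val := ⟨rfl⟩

/-- The Kunen–van Mill–Mills space: nondecreasing functions from ω₂ to ω₁ + 1. -/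
def KvMM : Set (Idx → Val) := {x | ∀ a b : Idx, a ≤ b → x a ≤ x b}

/-- A set `L` is a P-set if every Gδ-set containing `L` is a neighbourhood of `L`. -/
def IsPSet {Y : Type*} [TopologicalSpace Y] (L : Set Y) : Prop :=
  ∀ G : Set Y, IsGδ G → L ⊆ G → L ⊆ interior G

/-- `A^ξ = { x ∈ X : x(β) ≤ ξ for all β }`, as a subset of `X = KvMM`. -/
def Aup (ξ : Ordinal) (hξ : ξ < omega1) : Set KvMM :=
  {x | ∀ β : Idx, (x : Idx → Val) β ≤ ⟨ξ, hξ.le⟩}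

/-! ### Auxiliary material -/

noncomputable instance : SupSet Val :=
  ⟨fun S => ⟨sSup (Subtype.val '' S),
    csSup_le' (fun γ hγ => by obtain ⟨c, -, rfl⟩ := hγ; exact c.2)⟩⟩

noncomputable instance : InfSet Val := ⟨fun S => sSup (lowerBounds S)⟩

lemma Val.isLUB_sSup (S : Set Val) : IsLUB S (sSup S) := by
  constructor
  · intro x hx
    show x.val ≤ sSup (Subtype.val '' S)
    exact le_csSup ⟨omega1, fun γ hγ => by obtain ⟨c, -, rfl⟩ := hγ; exact c.2⟩ ⟨x, hx, rfl⟩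
  · intro b hb
    show sSup (Subtype.val '' S) ≤ b.val
    exact csSup_le' (fun γ hγ => by obtain ⟨c, hc, rfl⟩ := hγ; exact hb hc)

noncomputable instance : CompleteLattice Val :=
  { (inferInstance : Lattice Val) with
    isLUB_sSup := fun S => Val.isLUB_sSup S
    isGLB_sInf := fun S => ⟨fun a ha => (Val.isLUB_sSup (lowerBounds S)).2 fun _ hb => hb ha,
      fun a ha => (Val.isLUB_sSup (lowerBounds S)).1 ha⟩
    top := ⟨omega1, le_rfl⟩
    le_top := fun a => a.2
    bot := ⟨0, (zero_le : (0 : Ordinal) ≤ omega1)⟩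
    bot_le := fun a => Subtype.mk_le_mk.mpr (zero_le : (0 : Ordinal) ≤ a.val) }

noncomputable instance : CompleteLinearOrder Val :=
  { (inferInstance : CompleteLattice Val), (Subtype.instLinearOrder _ : LinearOrder Val),
    LinearOrder.toBiheytingAlgebra Val with }

instance : CompactSpace Val := compactSpace_of_completeLinearOrder

lemma isClosed_KvMM : IsClosed KvMM := by
  have h : KvMM = ⋂ (a : Idx), ⋂ (b : Idx), ⋂ (_ : a ≤ b), {x : Idx → Val | x a ≤ x b} := by
    ext x
    simp only [KvMM, Set.mem_setOf_eq, Set.mem_iInter]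
  rw [h]
  exact isClosed_iInter fun a => isClosed_iInter fun b => isClosed_iInter fun _ =>
    isClosed_le (continuous_apply a) (continuous_apply b)

instance : CompactSpace KvMM := isCompact_iff_compactSpace.mp isClosed_KvMM.isCompact

lemma omega1_isLimit : Order.IsSuccLimit omega1 := isSuccLimit_ord (aleph0_le_aleph 1)

lemma omega2_isLimit : Order.IsSuccLimit omega2 := isSuccLimit_ord (aleph0_le_aleph 2)

lemma omega2_pos : (0 : Ordinal) < omega2 := omega2_isLimit.pos

lemma cof_omega2 : omega2.cof = aleph 2 := by
  have h2 := Cardinal.isRegular_aleph_succ 1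
  rw [show Order.succ (1 : Ordinal) = 2 by
    rw [Order.succ_eq_add_one, one_add_one_eq_two]] at h2
  exact h2.cof_eq

/-- The basic clopen sets `C δ = {y : y δ ≤ ξ}` squeezing down to `A^ξ`. -/
def Cset {ξ : Ordinal} (hξ : ξ < omega1) (δ : Idx) : Set KvMM :=
  {y | (y : Idx → Val) δ ≤ ⟨ξ, hξ.le⟩}

lemma continuous_eval (δ : Idx) : Continuous (fun y : KvMM => (y : Idx → Val) δ) :=
  (continuous_apply δ).comp continuous_subtype_val

lemma Cset_isClosed {ξ : Ordinal} (hξ : ξ < omega1) (δ : Idx) : IsClosed (Cset hξ δ) :=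
  (isClosed_Iic (a := (⟨ξ, hξ.le⟩ : Val))).preimage (continuous_eval δ)

lemma succ_le_omega1 {ξ : Ordinal} (hξ : ξ < omega1) : ξ + 1 ≤ omega1 := by
  rw [Ordinal.add_one_eq_succ]
  exact (omega1_isLimit.succ_lt hξ).le

lemma Cset_isOpen {ξ : Ordinal} (hξ : ξ < omega1) (δ : Idx) : IsOpen (Cset hξ δ) := by
  have hset : Cset hξ δ =
      (fun y : KvMM => (y : Idx → Val) δ) ⁻¹' (Set.Iio ⟨ξ + 1, succ_le_omega1 hξ⟩) := by
    ext y
    simp only [Cset, Set.mem_setOf_eq, Set.mem_preimage, Set.mem_Iio]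
    constructor
    · intro h
      exact lt_of_le_of_lt h (Subtype.mk_lt_mk.mpr (lt_add_one ξ))
    · intro h
      have h' : ((y : Idx → Val) δ : Ordinal) < ξ + 1 := h
      apply Subtype.coe_le_coe.mp
      rw [Ordinal.add_one_eq_succ] at h'
      exact Order.lt_succ_iff.mp h'
  rw [hset]
  exact isOpen_Iio.preimage (continuous_eval δ)

lemma Cset_mono {ξ : Ordinal} (hξ : ξ < omega1) {δ δ' : Idx} (h : δ ≤ δ') :
    Cset hξ δ' ⊆ Cset hξ δ :=
  fun y hy => le_trans (y.2 δ δ' h) hy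

lemma Aup_subset_Cset {ξ : Ordinal} (hξ : ξ < omega1) (δ : Idx) : Aup ξ hξ ⊆ Cset hξ δ :=
  fun _ hx => hx δ

/-- The key compactness lemma: every open set containing `A^ξ` contains some `C δ`. -/
lemma exists_Cset_subset {ξ : Ordinal} (hξ : ξ < omega1) {U : Set KvMM} (hU : IsOpen U)
    (hA : Aup ξ hξ ⊆ U) : ∃ δ : Idx, Cset hξ δ ⊆ U := by
  have hcomp : IsCompact Uᶜ := hU.isClosed_compl.isCompact
  have hcover : Uᶜ ⊆ ⋃ δ : Idx, (Cset hξ δ)ᶜ := by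
    intro y hy
    by_contra hcon
    simp only [Set.mem_iUnion, Set.mem_compl_iff, not_exists, not_not] at hcon
    exact hy (hA fun β => hcon β)
  obtain ⟨F, hF⟩ := hcomp.elim_finite_subcover (fun δ => (Cset hξ δ)ᶜ)
    (fun δ => (Cset_isClosed hξ δ).isOpen_compl) hcover
  have hs : F.sup (fun δ : Idx => δ.val) < omega2 :=
    (Finset.sup_lt_iff omega2_pos).mpr fun δ _ => δ.2
  refine ⟨⟨F.sup (fun δ : Idx => δ.val), hs⟩, ?_⟩
  intro y hy
  by_contra hyU
  have hy' := hF hyU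
  simp only [Set.mem_iUnion, Set.mem_compl_iff] at hy'
  obtain ⟨δ, hδF, hyδ⟩ := hy'
  exact hyδ (Cset_mono hξ (show δ.val ≤ F.sup (fun δ : Idx => δ.val) from Finset.le_sup hδF) hy)

universe u v

lemma Aup_isClosed (ξ : Ordinal.{u}) (hξ : ξ < omega1.{u}) : IsClosed (Aup.{u,v} ξ hξ) := by
  have h : Aup.{u,v} ξ hξ = ⋂ δ : Idx.{v}, Cset hξ δ := by
    ext x; simp only [Aup, Cset, Set.mem_setOf_eq, Set.mem_iInter]
  rw [h]
  exact isClosed_iInter fun δ => Cset_isClosed hξ δ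

lemma Aup_interior_closure (ξ : Ordinal.{u}) (hξ : ξ < omega1.{u}) :
    interior (closure (Aup.{u,v} ξ hξ)) = ∅ := by
  rw [(Aup_isClosed ξ hξ).closure_eq, Set.eq_empty_iff_forall_notMem]
  intro x hx
  obtain ⟨V, hVopen, hVeq⟩ := isOpen_induced_iff.mp (isOpen_interior (s := Aup.{u,v} ξ hξ))
  have hxV : (x : Idx → Val) ∈ V := by
    rw [← hVeq] at hx; exact hx
  obtain ⟨I, u', hu, hpi⟩ := isOpen_pi_iff.mp hVopen _ hxV
  set s : Ordinal := I.sup (fun δ : Idx => δ.val) with hs_def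
  have hs : s < omega2 := (Finset.sup_lt_iff omega2_pos).mpr fun δ _ => δ.2
  have hs1 : s + 1 < omega2 := by
    rw [Ordinal.add_one_eq_succ]
    exact omega2_isLimit.succ_lt hs
  classical
  set y : Idx → Val := fun β => if β.val ≤ s then (x : Idx → Val) β else ⟨omega1, le_rfl⟩
    with hy_def
  have hyK : y ∈ KvMM := by
    intro a b hab
    by_cases hb : b.val ≤ s
    · have ha : a.val ≤ s := le_trans hab hb
      simp only [hy_def, ha, hb, if_true]
      exact x.2 a b hab
    · by_cases ha : a.val ≤ s
      · simp only [hy_def, ha, hb, if_true, if_false]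
        exact ((x : Idx → Val) a).2
      · simp only [hy_def, ha, hb, if_false]
        exact le_rfl
  have hypi : y ∈ (I : Set Idx).pi u' := by
    intro δ hδ
    have hδs : δ.val ≤ s := Finset.le_sup hδ
    simp only [hy_def, hδs, if_true]
    exact (hu δ hδ).2
  have hyA : (⟨y, hyK⟩ : KvMM) ∈ Aup.{u,v} ξ hξ := by
    have hmem : (⟨y, hyK⟩ : KvMM) ∈ interior (Aup.{u,v} ξ hξ) := by
      rw [← hVeq]; exact hpi hypi
    exact interior_subset hmem
  have hval : y ⟨s + 1, hs1⟩ = ⟨omega1, le_rfl⟩ := by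
    simp only [hy_def]
    rw [if_neg (lt_add_one s).not_ge]
  have h0 : y ⟨s + 1, hs1⟩ ≤ (⟨ξ, hξ.le⟩ : Val) := hyA ⟨s + 1, hs1⟩
  rw [hval] at h0
  exact absurd (Subtype.mk_le_mk.mp h0) hξ.not_ge

lemma Aup_isPSet (ξ : Ordinal.{u}) (hξ : ξ < omega1.{u}) : IsPSet (Aup.{u,v} ξ hξ) := by
  intro G hG hAG
  obtain ⟨T, hTopen, hTct, rfl⟩ := hG
  rcases T.eq_empty_or_nonempty with rfl | hne
  · simp only [Set.sInter_empty, interior_univ]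
    exact fun x _ => Set.mem_univ x
  · obtain ⟨f, rfl⟩ := hTct.exists_eq_range hne
    have hAn : ∀ n : ℕ, Aup.{u,v} ξ hξ ⊆ f n := fun n =>
      hAG.trans (Set.sInter_subset_of_mem (Set.mem_range_self n))
    choose δ hδ using fun n : ℕ =>
      exists_Cset_subset hξ (hTopen _ (Set.mem_range_self n)) (hAn n)
    have hbound : (⨆ n : ℕ, (δ n).val) < omega2 := by
      apply Ordinal.iSup_lt_ord_lift _ fun n => (δ n).2
      rw [cof_omega2, Cardinal.mk_nat, Cardinal.lift_aleph0]
      exact aleph0_lt_aleph_one.trans (aleph_lt_aleph.mpr one_lt_two)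
    have hCsub : Cset hξ ⟨⨆ n : ℕ, (δ n).val, hbound⟩ ⊆ ⋂₀ Set.range f := by
      rintro z hz t ⟨n, rfl⟩
      apply hδ n
      exact Cset_mono hξ
        (show (δ n).val ≤ ⨆ n : ℕ, (δ n).val from le_ciSup (Ordinal.bddAbove_range _) n) hz
    exact (Aup_subset_Cset hξ _).trans
      (interior_maximal hCsub (Cset_isOpen hξ _))

theorem Aup_isClosed_nowhereDense_pset (ξ : Ordinal) (hξ : ξ < omega1) :
    IsClosed (Aup ξ hξ) ∧ interior (closure (Aup ξ hξ)) = ∅ ∧ IsPSet (Aup ξ hξ) :=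
  ⟨Aup_isClosed ξ hξ, Aup_interior_closure ξ hξ, Aup_isPSet ξ hξ⟩

end
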